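/- Let n and k be positive integers with k ≥ 2, and suppose there exists an ℝ-linear subspace C of the space of n×n real matrices with dim_ℝ C = k such that every nonzero matrix in C is invertible. Then there exist k − 1 continuous vector fields φ_1, ..., φ_{k−1} on the unit sphere S^{n−1} ⊆ ℝ^n (continuous maps φ_i : S^{n−1} → ℝ^n with ⟨v, φ_i(v)⟩ = 0 for all v ∈ S^{n−1}) that are linearly independent, i.e., for every v ∈ S^{n−1} the vectors φ_1(v), ..., φ_{k−1}(v) are linearly independent over ℝ. -/

import Mathlib

/-- a `k`-dimensional space of invertible `n×n` real matrices
(`k ≥ 2`) yields `k−1` everywhere linearly independent continuous tangent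
vector fields on the unit sphere `S^{n−1} ⊆ ℝ^n`. -/
theorem vector_fields_from_code (n k : ℕ) (hn : 0 < n) (hk : 2 ≤ k)
    (C : Submodule ℝ (Matrix (Fin n) (Fin n) ℝ))
    (hdim : Module.finrank ℝ C = k)
    (hC : ∀ A ∈ C, A ≠ 0 → IsUnit A) :
    ∃ φ : Fin (k - 1) →
        (Metric.sphere (0 : EuclideanSpace ℝ (Fin n)) 1) → EuclideanSpace ℝ (Fin n),
      (∀ i, Continuous (φ i)) ∧
      (∀ i, ∀ v : Metric.sphere (0 : EuclideanSpace ℝ (Fin n)) 1,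
        (inner ℝ (v : EuclideanSpace ℝ (Fin n)) (φ i v) : ℝ) = 0) ∧
      (∀ v : Metric.sphere (0 : EuclideanSpace ℝ (Fin n)) 1,
        LinearIndependent ℝ (fun i => φ i v)) := by
  obtain ⟨m, rfl⟩ : ∃ m, k = m + 1 := ⟨k - 1, by omega⟩
  simp only [Nat.add_one_sub_one]
  set E := EuclideanSpace ℝ (Fin n)
  -- basis of C
  have hfd : FiniteDimensional ℝ C := inferInstance
  let b : Module.Basis (Fin (m + 1)) ℝ C := Module.finBasisOfFinrankEq ℝ C hdim
  let A : Fin (m + 1) → Matrix (Fin n) (Fin n) ℝ := fun j => (b j : _)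
  have hA_li : LinearIndependent ℝ A :=
    b.linearIndependent.map' C.subtype C.ker_subtype
  have hAmem : ∀ j, A j ∈ C := fun j => (b j).2
  have hA0 : IsUnit (A 0) := by
    apply hC _ (hAmem 0)
    simpa [A] using b.ne_zero 0
  have hA0det : IsUnit (A 0).det := (Matrix.isUnit_iff_isUnit_det _).mp hA0
  let T : Matrix (Fin n) (Fin n) ℝ → (E →L[ℝ] E) :=
    fun M => Matrix.toEuclideanCLM (𝕜 := ℝ) M
  have hT1 : T 1 = 1 := map_one _
  have hTmul : ∀ M N, T (M * N) = T M * T N := fun M N => map_mul _ M N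
  -- key independence lemma
  have key : ∀ w : E, w ≠ 0 → ∀ d : Fin (m + 1) → ℝ,
      ∑ j, d j • (T (A j)) w = 0 → ∀ j, d j = 0 := by
    intro w hw d hd
    set M : Matrix (Fin n) (Fin n) ℝ := ∑ j, d j • A j with hM
    have hTM : T M = ∑ j, d j • T (A j) := by
      simp [T, hM, map_sum, map_smul]
    have hMw : (T M) w = 0 := by
      rw [hTM]
      simpa [ContinuousLinearMap.sum_apply] using hd
    have hMC : M ∈ C := Submodule.sum_mem _ fun j _ => C.smul_mem _ (hAmem j)
    have hM0 : M = 0 := by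
      by_contra h
      have hU := hC M hMC h
      have hUdet : IsUnit M.det := (Matrix.isUnit_iff_isUnit_det _).mp hU
      have : w = 0 := by
        calc w = (T 1) w := by rw [hT1]; rfl
        _ = (T (M⁻¹ * M)) w := by rw [Matrix.nonsing_inv_mul M hUdet]
        _ = (T M⁻¹) ((T M) w) := by rw [hTmul]; rfl
        _ = 0 := by rw [hMw]; simp
      exact hw this
    exact Fintype.linearIndependent_iff.mp hA_li d (by rw [← hM, hM0]) 
  -- the vector fields
  let B : Fin m → Matrix (Fin n) (Fin n) ℝ := fun i => A i.succ * (A 0)⁻¹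
  refine ⟨fun i v => (T (B i)) ↑v - (inner ℝ (v : E) ((T (B i)) ↑v) : ℝ) • (v : E),
    ?_, ?_, ?_⟩
  · intro i
    exact ((T (B i)).continuous.comp continuous_subtype_val).sub
      ((continuous_subtype_val.inner (𝕜 := ℝ)
        ((T (B i)).continuous.comp continuous_subtype_val)).smul
        continuous_subtype_val)
  · intro i v
    have hv1 : ‖(v : E)‖ = 1 := by simpa using mem_sphere_zero_iff_norm.mp v.2
    have hvv : (inner ℝ (v : E) (v : E) : ℝ) = 1 := by
      rw [real_inner_self_eq_norm_sq, hv1]; norm_num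
    rw [inner_sub_right, inner_smul_right, hvv, mul_one, sub_self]
  · intro v
    have hv1 : ‖(v : E)‖ = 1 := by simpa using mem_sphere_zero_iff_norm.mp v.2
    have hv0 : (v : E) ≠ 0 := by
      intro h; rw [h] at hv1; simp at hv1
    rw [Fintype.linearIndependent_iff]
    intro c hc i
    have hc' : ∑ i : Fin m, c i • ((T (B i)) ↑v
        - (inner ℝ (v : E) ((T (B i)) ↑v) : ℝ) • (v : E)) = 0 := hc
    set w : E := (T (A 0)⁻¹) ↑v with hwdef
    have hA0w : (T (A 0)) w = ↑v := by
      have : T (A 0) * T (A 0)⁻¹ = 1 := by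
        rw [← hTmul, Matrix.mul_nonsing_inv _ hA0det, hT1]
      calc (T (A 0)) w = (T (A 0) * T (A 0)⁻¹) ↑v := rfl
      _ = ↑v := by rw [this]; rfl
    have hw0 : w ≠ 0 := by
      intro h
      apply hv0
      rw [← hA0w, h]; simp
    have hBw : ∀ i : Fin m, (T (B i)) ↑v = (T (A i.succ)) w := by
      intro i
      rw [show (T (B i)) ↑v = (T (A i.succ) * T (A 0)⁻¹) ↑v from by rw [← hTmul]]
      rfl
    set s : ℝ := ∑ i : Fin m, c i * (inner ℝ (v : E) ((T (B i)) ↑v) : ℝ) with hs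
    let d : Fin (m + 1) → ℝ := Fin.cases (-s) c
    have hsum : ∑ j, d j • (T (A j)) w = 0 := by
      rw [Fin.sum_univ_succ]
      have h1 : ∑ i : Fin m, d i.succ • (T (A i.succ)) w
          = ∑ i : Fin m, c i • (T (B i)) ↑v := by
        refine Finset.sum_congr rfl fun i _ => ?_
        rw [hBw i]; rfl
      have h2 : ∑ i : Fin m, c i • (T (B i)) ↑v = s • (v : E) := by
        have expand : ∀ i : Fin m, c i • (T (B i)) ↑v
            = c i • ((T (B i)) ↑v - (inner ℝ (v : E) ((T (B i)) ↑v) : ℝ) • (v : E))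
              + (c i * (inner ℝ (v : E) ((T (B i)) ↑v) : ℝ)) • (v : E) := by
          intro i
          rw [smul_sub, ← smul_smul, sub_add_cancel]
        calc ∑ i : Fin m, c i • (T (B i)) ↑v
            = ∑ i : Fin m, (c i • ((T (B i)) ↑v
                - (inner ℝ (v : E) ((T (B i)) ↑v) : ℝ) • (v : E))
              + (c i * (inner ℝ (v : E) ((T (B i)) ↑v) : ℝ)) • (v : E)) :=
              Finset.sum_congr rfl fun i _ => expand i
          _ = (∑ i : Fin m, c i • ((T (B i)) ↑v
                - (inner ℝ (v : E) ((T (B i)) ↑v) : ℝ) • (v : E)))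
              + (∑ i : Fin m, c i * (inner ℝ (v : E) ((T (B i)) ↑v) : ℝ)) • (v : E) := by
              rw [Finset.sum_add_distrib, Finset.sum_smul]
          _ = s • (v : E) := by rw [hc', zero_add, hs]
      have hd0 : d 0 = -s := rfl
      rw [h1, h2, hd0, hA0w, neg_smul, neg_add_cancel]
    have := key w hw0 d hsum i.succ
    simpa [d] using this
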